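/- The graphs G₅ and G₆ are not isomorphic, and each of them is isomorphic to a graph obtained from the Heawood graph H by deleting three pairwise disjoint edges: there exist edges e₁, e₂, e₃ of H, pairwise sharing no endpoint, with G₅ isomorphic to H minus {e₁, e₂, e₃}, and similarly there exist edges f₁, f₂, f₃ of H, pairwise sharing no endpoint, with G₆ isomorphic to H minus {f₁, f₂, f₃}. -/

import Mathlib

/-- The Heawood graph: the incidence graph of the Fano plane, on vertex set
`ZMod 7 ⊕ ZMod 7`, where point `Sum.inl p` is adjacent to line `Sum.inr ℓ` if and only if
`ℓ - p ∈ {0, 1, 3}`, and no two points and no two lines are adjacent. -/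
def Heawood : SimpleGraph (ZMod 7 ⊕ ZMod 7) :=
  SimpleGraph.fromRel (fun a b => ∃ p ℓ : ZMod 7,
    a = Sum.inl p ∧ b = Sum.inr ℓ ∧ ℓ - p ∈ ({0, 1, 3} : Set (ZMod 7)))

/-- Two edges (elements of `Sym2 V`) are disjoint if they share no endpoint. -/
def EdgeDisj {V : Type*} (e f : Sym2 V) : Prop := ∀ v : V, v ∈ e → v ∉ f

/-- The graph `G₅` (the simplicial inverse pyramid): vertices `vᵢ = i` for `0 ≤ i ≤ 5`,
`mᵢ = 6 + i` for `0 ≤ i ≤ 5`, `t = 12`, `b = 13`; edges `vᵢ ~ v_{(i+1) % 6}`, `vᵢ ~ mᵢ`,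
`mᵢ ~ t` for `i` even and `mᵢ ~ b` for `i` odd. -/
def G5 : SimpleGraph (Fin 14) :=
  SimpleGraph.fromRel (fun a b => (a, b) ∈
    ([(0, 1), (1, 2), (2, 3), (3, 4), (4, 5), (5, 0),
      (0, 6), (1, 7), (2, 8), (3, 9), (4, 10), (5, 11),
      (6, 12), (8, 12), (10, 12), (7, 13), (9, 13), (11, 13)] : List (Fin 14 × Fin 14)))

/-- The graph `G₆`: vertices `jᵢ = i`, `aᵢ = 3 + i`, `xᵢ = 6 + i`, `bᵢ = 9 + i` for
`0 ≤ i ≤ 2`, `u = 12`, `d = 13`; edges `jᵢ ~ aᵢ`, `aᵢ ~ j_{(i+1) % 3}` (a hexagon),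
`u ~ bᵢ`, `bᵢ ~ xᵢ`, `d ~ xᵢ`, `xᵢ ~ jᵢ`. -/
def G6 : SimpleGraph (Fin 14) :=
  SimpleGraph.fromRel (fun a b => (a, b) ∈
    ([(0, 3), (1, 4), (2, 5), (3, 1), (4, 2), (5, 0),
      (12, 9), (12, 10), (12, 11), (9, 6), (10, 7), (11, 8),
      (13, 6), (13, 7), (13, 8), (6, 0), (7, 1), (8, 2)] : List (Fin 14 × Fin 14)))

instance : DecidableRel Heawood.Adj := fun a b =>
  decidable_of_iff (a ≠ b ∧
    ((∃ p ℓ : ZMod 7, a = Sum.inl p ∧ b = Sum.inr ℓ ∧ (ℓ - p = 0 ∨ ℓ - p = 1 ∨ ℓ - p = 3)) ∨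
     (∃ p ℓ : ZMod 7, b = Sum.inl p ∧ a = Sum.inr ℓ ∧ (ℓ - p = 0 ∨ ℓ - p = 1 ∨ ℓ - p = 3))))
    (by rw [Heawood, SimpleGraph.fromRel_adj]; simp [Set.mem_insert_iff])

instance : DecidableRel G5.Adj := fun a b =>
  decidable_of_iff _ (SimpleGraph.fromRel_adj _ a b).symm

instance : DecidableRel G6.Adj := fun a b =>
  decidable_of_iff _ (SimpleGraph.fromRel_adj _ a b).symm

instance instDel (e₁ e₂ e₃ : Sym2 (ZMod 7 ⊕ ZMod 7)) :
    DecidableRel (Heawood.deleteEdges {e₁, e₂, e₃}).Adj := fun a b =>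
  decidable_of_iff (Heawood.Adj a b ∧ ¬(s(a, b) = e₁ ∨ s(a, b) = e₂ ∨ s(a, b) = e₃))
    (by rw [SimpleGraph.deleteEdges_adj]; simp [Set.mem_insert_iff])

/-- The vertex map realizing `G5` inside the Heawood graph minus three disjoint edges. -/
def f5 : Fin 14 → ZMod 7 ⊕ ZMod 7 :=
  ![Sum.inl 2, Sum.inr 3, Sum.inl 3, Sum.inr 4, Sum.inl 4, Sum.inr 5, Sum.inr 2,
    Sum.inl 0, Sum.inr 6, Sum.inl 1, Sum.inr 0, Sum.inl 5, Sum.inl 6, Sum.inr 1]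

/-- The vertex map realizing `G6` inside the Heawood graph minus three disjoint edges. -/
def f6 : Fin 14 → ZMod 7 ⊕ ZMod 7 :=
  ![Sum.inr 1, Sum.inr 3, Sum.inr 4, Sum.inl 0, Sum.inl 3, Sum.inl 1, Sum.inl 5,
    Sum.inl 2, Sum.inl 4, Sum.inr 6, Sum.inr 2, Sum.inr 0, Sum.inl 6, Sum.inr 5]

lemma key5 : ∀ a b : Fin 14,
    (Heawood.deleteEdges {s(Sum.inl 0, Sum.inr 0), s(Sum.inl 1, Sum.inr 2),
      s(Sum.inl 5, Sum.inr 6)}).Adj (f5 a) (f5 b) ↔ G5.Adj a b := by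
  decide

lemma key6 : ∀ a b : Fin 14,
    (Heawood.deleteEdges {s(Sum.inl 0, Sum.inr 0), s(Sum.inl 1, Sum.inr 2),
      s(Sum.inl 3, Sum.inr 6)}).Adj (f6 a) (f6 b) ↔ G6.Adj a b := by
  decide

lemma bij5 : Function.Bijective f5 := by decide

lemma bij6 : Function.Bijective f6 := by decide

/-- `G5` is isomorphic to the Heawood graph minus three disjoint edges. -/
noncomputable def iso5 : G5 ≃g Heawood.deleteEdges {s(Sum.inl 0, Sum.inr 0),
    s(Sum.inl 1, Sum.inr 2), s(Sum.inl 5, Sum.inr 6)} :=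
  { toEquiv := Equiv.ofBijective f5 bij5, map_rel_iff' := fun {a b} => key5 a b }

/-- `G6` is isomorphic to the Heawood graph minus three disjoint edges. -/
noncomputable def iso6 : G6 ≃g Heawood.deleteEdges {s(Sum.inl 0, Sum.inr 0),
    s(Sum.inl 1, Sum.inr 2), s(Sum.inl 3, Sum.inr 6)} :=
  { toEquiv := Equiv.ofBijective f6 bij6, map_rel_iff' := fun {a b} => key6 a b }

lemma iso_degree {V W : Type*} [Fintype V] [Fintype W] [DecidableEq V] [DecidableEq W]
    {G : SimpleGraph V} {G' : SimpleGraph W} [DecidableRel G.Adj] [DecidableRel G'.Adj]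
    (f : G ≃g G') (v : V) : G'.degree (f v) = G.degree v := by
  rw [← SimpleGraph.card_neighborSet_eq_degree, ← SimpleGraph.card_neighborSet_eq_degree]
  exact (Fintype.card_congr (f.mapNeighborSet v)).symm

/-- `G5` and `G6` are not isomorphic: `G5` has two degree-3 vertices all of whose
neighbors have degree 2, while `G6` has only one such vertex. -/
lemma not_iso_G5_G6 : ¬ Nonempty (G5 ≃g G6) := by
  rintro ⟨f⟩
  have key : ∀ v : Fin 14, (G5.degree v = 3 ∧ ∀ w, G5.Adj v w → G5.degree w = 2) →
      (G6.degree (f v) = 3 ∧ ∀ w, G6.Adj (f v) w → G6.degree w = 2) := by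
    rintro v ⟨h3, h2⟩
    refine ⟨by rw [iso_degree f v]; exact h3, fun w hw => ?_⟩
    have hadj : G5.Adj v (f.symm w) := by
      rw [← f.map_rel_iff, f.apply_symm_apply]; exact hw
    have := h2 _ hadj
    calc G6.degree w = G6.degree (f (f.symm w)) := by rw [f.apply_symm_apply]
      _ = G5.degree (f.symm w) := iso_degree f _
      _ = 2 := this
  have hle : (Finset.univ.filter
        (fun v => G5.degree v = 3 ∧ ∀ w, G5.Adj v w → G5.degree w = 2)).card ≤
      (Finset.univ.filter
        (fun v => G6.degree v = 3 ∧ ∀ w, G6.Adj v w → G6.degree w = 2)).card := by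
    apply Finset.card_le_card_of_injOn f
    · intro v hv
      simp only [Finset.mem_coe, Finset.mem_filter, Finset.mem_univ, true_and] at hv ⊢
      exact key v hv
    · exact f.injective.injOn
  have c5 : (Finset.univ.filter
      (fun v => G5.degree v = 3 ∧ ∀ w, G5.Adj v w → G5.degree w = 2)).card = 2 := by decide
  have c6 : (Finset.univ.filter
      (fun v => G6.degree v = 3 ∧ ∀ w, G6.Adj v w → G6.degree w = 2)).card = 1 := by decide
  omega

/-- `G₅` and `G₆` are non-isomorphic, and each is isomorphic to a graph obtained from the
Heawood graph by deleting three pairwise disjoint edges. -/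
theorem G5_G6_from_heawood :
    ¬ Nonempty (G5 ≃g G6) ∧
    (∃ e₁ ∈ Heawood.edgeSet, ∃ e₂ ∈ Heawood.edgeSet, ∃ e₃ ∈ Heawood.edgeSet,
      EdgeDisj e₁ e₂ ∧ EdgeDisj e₁ e₃ ∧ EdgeDisj e₂ e₃ ∧
      Nonempty (G5 ≃g Heawood.deleteEdges {e₁, e₂, e₃})) ∧
    (∃ f₁ ∈ Heawood.edgeSet, ∃ f₂ ∈ Heawood.edgeSet, ∃ f₃ ∈ Heawood.edgeSet,
      EdgeDisj f₁ f₂ ∧ EdgeDisj f₁ f₃ ∧ EdgeDisj f₂ f₃ ∧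
      Nonempty (G6 ≃g Heawood.deleteEdges {f₁, f₂, f₃})) := by
  refine ⟨not_iso_G5_G6,
    ⟨s(Sum.inl 0, Sum.inr 0), Heawood.mem_edgeSet.mpr (by decide),
     s(Sum.inl 1, Sum.inr 2), Heawood.mem_edgeSet.mpr (by decide),
     s(Sum.inl 5, Sum.inr 6), Heawood.mem_edgeSet.mpr (by decide),
     by rw [EdgeDisj]; decide, by rw [EdgeDisj]; decide, by rw [EdgeDisj]; decide, ⟨iso5⟩⟩,
    ⟨s(Sum.inl 0, Sum.inr 0), Heawood.mem_edgeSet.mpr (by decide),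
     s(Sum.inl 1, Sum.inr 2), Heawood.mem_edgeSet.mpr (by decide),
     s(Sum.inl 3, Sum.inr 6), Heawood.mem_edgeSet.mpr (by decide),
     by rw [EdgeDisj]; decide, by rw [EdgeDisj]; decide, by rw [EdgeDisj]; decide, ⟨iso6⟩⟩⟩
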